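/- arXiv:1108.2940 — 3 statements merged into one kernel-verified Lean document; each statement's English description precedes it below -/
import Mathlib

section
/- If a, b are distinct elements of a root basis Π with m_{ab} ≠ ∞ (i.e. (a,b) = -cos(π/m_{ab}) for an integer m_{ab} ≥ 2), then for each integer i, (ρ_a ρ_b)^i a = (sin((2i+1)θ)/sin θ)·a + (sin(2iθ)/sin θ)·b where θ = π/m_{ab}, and in particular ρ_a ρ_b has order m_{ab}. -/
open Real

variable {V : Type*} [AddCommGroup V] [Module ℝ V]

/-- The set of positive linear combinations of a set `A`. -/
def PLC (A : Set V) : Set V :=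
  {v | ∃ (s : Finset V) (c : V → ℝ), (↑s : Set V) ⊆ A ∧ (∀ x ∈ s, 0 ≤ c x) ∧
    (∃ x ∈ s, 0 < c x) ∧ v = ∑ x ∈ s, c x • x}

/-- A Coxeter datum (Krammer): a root basis `Pi` in `V` with bilinear form `B`. -/
structure CoxeterDatum (V : Type*) [AddCommGroup V] [Module ℝ V] where
  B : LinearMap.BilinForm ℝ V
  Pi : Set V
  norm_one : ∀ a ∈ Pi, B a a = 1
  symm : ∀ a ∈ Pi, ∀ b ∈ Pi, B a b = B b a
  offdiag : ∀ a ∈ Pi, ∀ b ∈ Pi, a ≠ b →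
    (∃ m : ℕ, 2 ≤ m ∧ B a b = -Real.cos (Real.pi / m)) ∨ B a b ≤ -1
  zero_not_plc : (0 : V) ∉ PLC Pi

namespace CoxeterDatum

variable (D : CoxeterDatum V)

/-- The reflection in the vector `a`, as a linear endomorphism of `V`. -/
noncomputable def refl (a : V) : Module.End ℝ V where
  toFun x := x - (2 * D.B x a) • a
  map_add' x y := by simp only [map_add, LinearMap.add_apply]; module
  map_smul' c x := by simp only [map_smul, LinearMap.smul_apply, smul_eq_mul,
    RingHom.id_apply]; module

/-- The set of simple reflections, as invertible endomorphisms of `V`. -/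
def simples : Set (Module.End ℝ V)ˣ :=
  {u | ∃ a ∈ D.Pi, (u : Module.End ℝ V) = D.refl a}

/-- The Coxeter group `W`, realized as the group generated by the simple reflections. -/
noncomputable def Wgrp : Subgroup (Module.End ℝ V)ˣ := Subgroup.closure D.simples

/-- The root system. -/
def roots : Set V :=
  {x | ∃ w ∈ D.Wgrp, ∃ a ∈ D.Pi, x = (w : Module.End ℝ V) a}

/-- The positive roots. -/
def posRoots : Set V := D.roots ∩ PLC D.Pi

/-- The negative roots. -/
def negRoots : Set V := {x | -x ∈ D.posRoots}

/-- The length of an element of `W` with respect to the simple reflections. -/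
noncomputable def len (w : (Module.End ℝ V)ˣ) : ℕ :=
  sInf {n | ∃ l : List (Module.End ℝ V)ˣ,
    l.length = n ∧ (∀ u ∈ l, u ∈ D.simples) ∧ l.prod = w}

/-- The depth of a root. -/
noncomputable def dp (x : V) : ℕ :=
  sInf {n | ∃ w ∈ D.Wgrp, D.len w = n ∧ (w : Module.End ℝ V) x ∈ D.negRoots}

/-- Dominance: `x` dominates `y` if every `w ∈ W` making `x` negative makes `y` negative. -/
def dom (x y : V) : Prop :=
  ∀ w ∈ D.Wgrp, (w : Module.End ℝ V) x ∈ D.negRoots → (w : Module.End ℝ V) y ∈ D.negRoots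

/-- `D(x)`: the set of positive roots other than `x` dominated by `x`. -/
def DSet (x : V) : Set V := {y | y ∈ D.posRoots ∧ y ≠ x ∧ D.dom x y}

/-- `D_n`: the set of positive roots dominating exactly `n` other positive roots. -/
def Dn (n : ℕ) : Set V :=
  {x | x ∈ D.posRoots ∧ (D.DSet x).Finite ∧ (D.DSet x).ncard = n}

/-- The set of reflections of `W`. -/
def TSet : Set (Module.End ℝ V)ˣ :=
  {t | ∃ w ∈ D.Wgrp, ∃ s ∈ D.simples, t = w * s * w⁻¹}

/-- `N(w)`: the set of positive roots sent to negative roots by `w`. -/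
def NSet (w : (Module.End ℝ V)ˣ) : Set V :=
  {z | z ∈ D.posRoots ∧ (w : Module.End ℝ V) z ∈ D.negRoots}

/-- `N̄(w)`: the reflections `t` with `ℓ(wt) < ℓ(w)`. -/
def Nbar (w : (Module.End ℝ V)ˣ) : Set (Module.End ℝ V)ˣ :=
  {t | t ∈ D.TSet ∧ D.len (w * t) < D.len w}

/-- The canonical generators of a reflection subgroup `W'`. -/
def canGens (W' : Subgroup (Module.End ℝ V)ˣ) : Set (Module.End ℝ V)ˣ :=
  {t | t ∈ D.TSet ∧ D.Nbar t ∩ (W' : Set (Module.End ℝ V)ˣ) = {t}}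

/-- `S(x)`: elements of `W` of minimal length sending `x` into `Π` (inverse-wise). -/
def SSet (x : V) : Set (Module.End ℝ V)ˣ :=
  {w | w ∈ D.Wgrp ∧ D.len w = D.dp x - 1 ∧ ((w⁻¹ : (Module.End ℝ V)ˣ) : Module.End ℝ V) x ∈ D.Pi}

end CoxeterDatum

/-- Proposition 1.2(i). -/
theorem rank_two_finite_order (D : CoxeterDatum V) {a b : V} (ha : a ∈ D.Pi) (hb : b ∈ D.Pi)
    (hab : a ≠ b) (m : ℕ) (hm : 2 ≤ m) (hB : D.B a b = -Real.cos (Real.pi / m))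
    (ua ub : (Module.End ℝ V)ˣ)
    (hua : (ua : Module.End ℝ V) = D.refl a) (hub : (ub : Module.End ℝ V) = D.refl b) :
    (∀ i : ℤ, (((ua * ub) ^ i : (Module.End ℝ V)ˣ) : Module.End ℝ V) a =
      (Real.sin (((2 * i + 1 : ℤ) : ℝ) * (Real.pi / m)) / Real.sin (Real.pi / m)) • a +
      (Real.sin (((2 * i : ℤ) : ℝ) * (Real.pi / m)) / Real.sin (Real.pi / m)) • b) ∧
    orderOf (ua * ub) = m := by

  -- basic numerics
  have hm2 : (2:ℝ) ≤ (m:ℝ) := by exact_mod_cast hm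
  have hm0 : (m:ℝ) ≠ 0 := by linarith
  set θ : ℝ := Real.pi / m with hθdef
  set s : ℝ := Real.sin θ with hsdef
  set c : ℝ := Real.cos θ with hcdef
  have hθpos : 0 < θ := div_pos Real.pi_pos (by linarith)
  have hθlt : θ < Real.pi := by
    rw [hθdef, div_lt_iff₀ (by linarith : (0:ℝ) < m)]
    nlinarith [Real.pi_pos]
  have hs : 0 < s := Real.sin_pos_of_pos_of_lt_pi hθpos hθlt
  have hsne : s ≠ 0 := ne_of_gt hs
  have hpyth : s^2 + c^2 = 1 := Real.sin_sq_add_cos_sq θ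
  have hBaa : D.B a a = 1 := D.norm_one a ha
  have hBbb : D.B b b = 1 := D.norm_one b hb
  have hBab : D.B a b = -c := hB
  have hBba : D.B b a = -c := by rw [← D.symm a ha b hb]; exact hB
  have hre : ∀ (r x : V), (D.refl r) x = x - (2 * D.B x r) • r := fun _ _ => rfl
  set g : (Module.End ℝ V)ˣ := ua * ub with hgdef
  -- one-step action on span{a,b}
  have step : ∀ x y : ℝ, (g : Module.End ℝ V) (x • a + y • b)
      = ((4*c^2-1)*x - 2*c*y) • a + (2*c*x - y) • b := by
    intro x y
    have h1 : (g : Module.End ℝ V) (x • a + y • b) = D.refl a (D.refl b (x • a + y • b)) := by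
      rw [hgdef, Units.val_mul, hua, hub, Module.End.mul_apply]
    rw [h1, hre, hre]
    simp only [map_sub, map_add, map_smul, LinearMap.sub_apply, LinearMap.add_apply,
      LinearMap.smul_apply, smul_eq_mul, hBaa, hBbb, hBab, hBba]
    module
  -- trig identities
  have id1 : ∀ X : ℝ, (4*c^2-1) * Real.sin X - 2*c * Real.sin (X - θ) = Real.sin (X + 2*θ) := by
    intro X
    have h2 : X + 2*θ = X + θ + θ := by ring
    rw [h2, Real.sin_add, Real.sin_add, Real.cos_add, Real.sin_sub]
    linear_combination Real.sin X * hpyth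
  have id2 : ∀ X : ℝ, 2*c * Real.sin X - Real.sin (X - θ) = Real.sin (X + θ) := by
    intro X
    rw [Real.sin_add, Real.sin_sub]; ring
  -- the key closed formula for natural powers
  have key : ∀ n : ℕ, ((g^n : (Module.End ℝ V)ˣ) : Module.End ℝ V) a
        = (Real.sin ((2*(n:ℝ)+1)*θ)/s) • a + (Real.sin ((2*(n:ℝ))*θ)/s) • b
      ∧ ((g^n : (Module.End ℝ V)ˣ) : Module.End ℝ V) b
        = (-(Real.sin ((2*(n:ℝ))*θ)/s)) • a + (-(Real.sin ((2*(n:ℝ)-1)*θ)/s)) • b := by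
    intro n
    induction n with
    | zero =>
      have h1 : (2*((0:ℕ):ℝ)+1)*θ = θ := by norm_num
      have h2 : (2*((0:ℕ):ℝ))*θ = 0 := by norm_num
      have h3 : (2*((0:ℕ):ℝ)-1)*θ = -θ := by norm_num
      constructor
      · rw [pow_zero, Units.val_one, Module.End.one_apply, h1, h2, ← hsdef, Real.sin_zero,
          div_self hsne, zero_div]
        simp
      · rw [pow_zero, Units.val_one, Module.End.one_apply, h2, h3, Real.sin_zero, Real.sin_neg,
          ← hsdef, neg_div, div_self hsne, zero_div]
        simp
    | succ n ih =>
      obtain ⟨iha, ihb⟩ := ih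
      have hg : ((g^(n+1) : (Module.End ℝ V)ˣ) : Module.End ℝ V)
          = (g : Module.End ℝ V) * ((g^n : (Module.End ℝ V)ˣ) : Module.End ℝ V) := by
        rw [pow_succ' g n, Units.val_mul]
      constructor
      · have e1 : Real.sin ((2*((n:ℝ)+1)+1)*θ)
            = (4*c^2-1) * Real.sin ((2*(n:ℝ)+1)*θ) - 2*c * Real.sin ((2*(n:ℝ))*θ) := by
          have k1 : (2*((n:ℝ)+1)+1)*θ = ((2*(n:ℝ)+1)*θ) + 2*θ := by ring
          have k2 : (2*(n:ℝ))*θ = ((2*(n:ℝ)+1)*θ) - θ := by ring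
          rw [k1, k2, id1]
        have e2 : Real.sin ((2*((n:ℝ)+1))*θ)
            = 2*c * Real.sin ((2*(n:ℝ)+1)*θ) - Real.sin ((2*(n:ℝ))*θ) := by
          have k1 : (2*((n:ℝ)+1))*θ = ((2*(n:ℝ)+1)*θ) + θ := by ring
          have k2 : (2*(n:ℝ))*θ = ((2*(n:ℝ)+1)*θ) - θ := by ring
          rw [k1, k2, id2]
        rw [hg, Module.End.mul_apply, iha, step, Nat.cast_succ, e1, e2]
        module
      · have e3 : Real.sin ((2*((n:ℝ)+1))*θ)
            = (4*c^2-1) * Real.sin ((2*(n:ℝ))*θ) - 2*c * Real.sin ((2*(n:ℝ)-1)*θ) := by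
          have k1 : (2*((n:ℝ)+1))*θ = ((2*(n:ℝ))*θ) + 2*θ := by ring
          have k2 : (2*(n:ℝ)-1)*θ = ((2*(n:ℝ))*θ) - θ := by ring
          rw [k1, k2, id1]
        have e4 : Real.sin ((2*((n:ℝ)+1)-1)*θ)
            = 2*c * Real.sin ((2*(n:ℝ))*θ) - Real.sin ((2*(n:ℝ)-1)*θ) := by
          have k1 : (2*((n:ℝ)+1)-1)*θ = ((2*(n:ℝ))*θ) + θ := by ring
          have k2 : (2*(n:ℝ)-1)*θ = ((2*(n:ℝ))*θ) - θ := by ring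
          rw [k1, k2, id2]
        rw [hg, Module.End.mul_apply, ihb, step, Nat.cast_succ, e3, e4]
        module
  -- g^m fixes a and b
  have hEa : ((g^m : (Module.End ℝ V)ˣ) : Module.End ℝ V) a = a := by
    rw [(key m).1]
    have t1 : (2*(m:ℝ)+1)*θ = θ + 2*Real.pi := by rw [hθdef]; field_simp; ring
    have t2 : (2*(m:ℝ))*θ = 0 + 2*Real.pi := by rw [hθdef]; field_simp; ring
    rw [t1, t2, Real.sin_add_two_pi, Real.sin_add_two_pi, Real.sin_zero, ← hsdef,
      div_self hsne, zero_div]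
    simp
  have hEb : ((g^m : (Module.End ℝ V)ˣ) : Module.End ℝ V) b = b := by
    rw [(key m).2]
    have t2 : (2*(m:ℝ))*θ = 0 + 2*Real.pi := by rw [hθdef]; field_simp; ring
    have t3 : (2*(m:ℝ)-1)*θ = -θ + 2*Real.pi := by rw [hθdef]; field_simp; ring
    rw [t2, t3, Real.sin_add_two_pi, Real.sin_add_two_pi, Real.sin_zero, Real.sin_neg,
      ← hsdef, neg_div, div_self hsne, zero_div]
    simp
  -- g fixes the orthogonal complement of {a, b}
  have hufix : ∀ x : V, D.B x a = 0 → D.B x b = 0 → (g : Module.End ℝ V) x = x := by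
    intro x h1 h2
    have h3 : (g : Module.End ℝ V) x = D.refl a (D.refl b x) := by
      rw [hgdef, Units.val_mul, hua, hub, Module.End.mul_apply]
    rw [h3, hre b x, h2]
    simp only [mul_zero, zero_smul, sub_zero]
    rw [hre a x, h1]
    simp
  -- g^m = 1
  have hgm : g ^ m = 1 := by
    apply Units.ext
    rw [Units.val_one]
    apply LinearMap.ext
    intro x
    rw [Module.End.one_apply]
    set α : ℝ := (D.B x a + c * D.B x b)/s^2 with hα
    set β : ℝ := (D.B x b + c * D.B x a)/s^2 with hβ
    set u : V := x - α • a - β • b with hu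
    have hu1 : D.B u a = 0 := by
      rw [hu]
      simp only [map_sub, map_smul, LinearMap.sub_apply, LinearMap.smul_apply, smul_eq_mul,
        hBaa, hBba, hα, hβ]
      field_simp
      linear_combination (D.B x a) * hpyth
    have hu2 : D.B u b = 0 := by
      rw [hu]
      simp only [map_sub, map_smul, LinearMap.sub_apply, LinearMap.smul_apply, smul_eq_mul,
        hBbb, hBab, hα, hβ]
      field_simp
      linear_combination (D.B x b) * hpyth
    have hgu : ∀ n : ℕ, ((g^n : (Module.End ℝ V)ˣ) : Module.End ℝ V) u = u := by
      intro n
      induction n with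
      | zero => simp
      | succ n ih =>
        rw [pow_succ' g n, Units.val_mul, Module.End.mul_apply, ih, hufix u hu1 hu2]
    have hx : x = α • a + β • b + u := by rw [hu]; abel
    calc ((g^m : (Module.End ℝ V)ˣ) : Module.End ℝ V) x
        = α • ((g^m : (Module.End ℝ V)ˣ) : Module.End ℝ V) a
          + β • ((g^m : (Module.End ℝ V)ˣ) : Module.End ℝ V) b
          + ((g^m : (Module.End ℝ V)ˣ) : Module.End ℝ V) u := by
          conv_lhs => rw [hx]
          simp [map_add, map_smul]
      _ = x := by rw [hEa, hEb, hgu m, ← hx]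
  -- linear independence of a and b
  have hindep : ∀ x y : ℝ, x • a + y • b = 0 → x = 0 ∧ y = 0 := by
    intro x y hxy
    have h1 : x - c*y = 0 := by
      have := congrArg (fun v => D.B v a) hxy
      simp only [map_add, map_smul, LinearMap.add_apply, LinearMap.smul_apply, smul_eq_mul,
        hBaa, hBba, map_zero, LinearMap.zero_apply] at this
      linarith [this]
    have h2 : -(c*x) + y = 0 := by
      have := congrArg (fun v => D.B v b) hxy
      simp only [map_add, map_smul, LinearMap.add_apply, LinearMap.smul_apply, smul_eq_mul,
        hBbb, hBab, map_zero, LinearMap.zero_apply] at this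
      linarith [this]
    have hx0 : x * s^2 = 0 := by linear_combination h1 + c * h2 + x * hpyth
    have hx : x = 0 := by
      rcases mul_eq_zero.mp hx0 with h | h
      · exact h
      · exact absurd h (pow_ne_zero 2 hsne)
    refine ⟨hx, ?_⟩
    rw [hx] at h2
    linarith [h2]
  -- the order is exactly m
  have horder : orderOf g = m := by
    rw [orderOf_eq_iff (by omega : 0 < m)]
    refine ⟨hgm, ?_⟩
    intro k hk hk0 hcon
    have hEka := (key k).1
    rw [hcon, Units.val_one, Module.End.one_apply] at hEka
    have h0 : (Real.sin ((2*(k:ℝ)+1)*θ)/s - 1) • a + (Real.sin ((2*(k:ℝ))*θ)/s) • b = 0 := by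
      have h0' : (Real.sin ((2*(k:ℝ)+1)*θ)/s - 1) • a + (Real.sin ((2*(k:ℝ))*θ)/s) • b
          = ((Real.sin ((2*(k:ℝ)+1)*θ)/s) • a + (Real.sin ((2*(k:ℝ))*θ)/s) • b) - a := by
        module
      rw [h0', ← hEka, sub_self]
    obtain ⟨hf, hg0⟩ := hindep _ _ h0
    have hsin0 : Real.sin ((2*(k:ℝ))*θ) = 0 := by
      rcases div_eq_zero_iff.mp hg0 with h | h
      · exact h
      · exact absurd h hsne
    obtain ⟨n, hn⟩ := Real.sin_eq_zero_iff.mp hsin0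
    rw [hθdef] at hn
    have hnm : (n:ℝ) * (m:ℝ) = 2*(k:ℝ) := by
      field_simp at hn
      have h' : ((n:ℝ)*(m:ℝ) - 2*(k:ℝ)) * Real.pi = 0 := by linear_combination Real.pi * hn
      rcases mul_eq_zero.mp h' with h | h
      · linarith
      · exact absurd h Real.pi_ne_zero
    have hnm' : n * (m:ℤ) = 2 * (k:ℤ) := by exact_mod_cast hnm
    have hmpos : (0:ℤ) < (m:ℤ) := by exact_mod_cast (by omega : 0 < m)
    have hkpos : (0:ℤ) < 2*(k:ℤ) := by exact_mod_cast (by omega : 0 < 2*k)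
    have hklt : 2*(k:ℤ) < 2*(m:ℤ) := by exact_mod_cast (by omega : 2*k < 2*m)
    have hn1 : n = 1 := by
      have hnpos : 0 < n := by nlinarith
      have hnlt : n < 2 := by nlinarith
      omega
    rw [hn1, one_mul] at hnm'
    have h2k : (2*(k:ℝ)) = (m:ℝ) := by exact_mod_cast hnm'.symm
    have harg : (2*(k:ℝ)+1)*θ = Real.pi + θ := by
      rw [h2k, hθdef]; field_simp
    rw [harg] at hf
    have hsinpi : Real.sin (Real.pi + θ) = -s := by
      rw [Real.sin_add, Real.sin_pi, Real.cos_pi, ← hsdef]; ring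
    rw [hsinpi, neg_div, div_self hsne] at hf
    norm_num at hf
  refine ⟨?_, horder⟩
  -- deduce the formula for all integer powers
  intro i
  have hmz : ((m:ℤ)) ≠ 0 := by exact_mod_cast (by omega : m ≠ 0)
  set k : ℕ := (i % (m:ℤ)).toNat with hkdef
  set q : ℤ := i / (m:ℤ) with hqdef
  have hknn : ((k:ℤ)) = i % (m:ℤ) := Int.toNat_of_nonneg (Int.emod_nonneg i hmz)
  have hiq : i = (m:ℤ)*q + k := by rw [hknn, hqdef]; exact (Int.mul_ediv_add_emod i m).symm
  have hmod : g ^ i = g ^ k := by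
    rw [← zpow_mod_orderOf g i, horder, ← hknn, zpow_natCast]
  have hiqr : (i:ℝ) = (m:ℝ)*(q:ℝ) + (k:ℝ) := by exact_mod_cast congrArg (Int.cast : ℤ → ℝ) hiq
  have hmθ : (m:ℝ)*θ = Real.pi := by rw [hθdef]; field_simp
  have t1 : ((2*i+1 : ℤ) : ℝ) * θ = (2*(k:ℝ)+1)*θ + (q:ℝ)*(2*Real.pi) := by
    push_cast
    rw [hiqr]
    linear_combination (2*(q:ℝ)) * hmθ
  have t2 : ((2*i : ℤ) : ℝ) * θ = (2*(k:ℝ))*θ + (q:ℝ)*(2*Real.pi) := by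
    push_cast
    rw [hiqr]
    linear_combination (2*(q:ℝ)) * hmθ
  rw [hmod, (key k).1, t1, t2, Real.sin_add_int_mul_two_pi, Real.sin_add_int_mul_two_pi]
end

section
/- If a, b are distinct elements of a root basis Π with (a,b) < -1, then setting θ = cosh⁻¹(-(a,b)), for each integer i, (ρ_a ρ_b)^i a = (sinh((2i+1)θ)/sinh θ)·a + (sinh(2iθ)/sinh θ)·b, and ρ_a ρ_b has infinite order. -/
open Real

variable {V : Type*} [AddCommGroup V] [Module ℝ V]

private lemma sinh_step_aux (x y : ℝ) :
    Real.sinh (x + 2*y) = 2 * Real.cosh y * Real.sinh (x + y) - Real.sinh x := by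
  rw [show x + 2*y = (x+y)+y by ring, Real.sinh_add, Real.cosh_add, Real.sinh_add]
  linear_combination (-Real.sinh x) * Real.cosh_sq y

/-- Proposition 1.2(ii), case `(a,b) < -1`, with `θ = cosh⁻¹(-(a,b))`. -/
theorem rank_two_infinite_order_hyperbolic (D : CoxeterDatum V) {a b : V}
    (ha : a ∈ D.Pi) (hb : b ∈ D.Pi) (hab : a ≠ b) (hB : D.B a b < -1)
    (θ : ℝ) (hθpos : 0 < θ) (hθ : Real.cosh θ = -(D.B a b))
    (ua ub : (Module.End ℝ V)ˣ)
    (hua : (ua : Module.End ℝ V) = D.refl a) (hub : (ub : Module.End ℝ V) = D.refl b) :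
    (∀ i : ℤ, (((ua * ub) ^ i : (Module.End ℝ V)ˣ) : Module.End ℝ V) a =
      (Real.sinh (((2 * i + 1 : ℤ) : ℝ) * θ) / Real.sinh θ) • a +
      (Real.sinh (((2 * i : ℤ) : ℝ) * θ) / Real.sinh θ) • b) ∧
    ¬ IsOfFinOrder (ua * ub) := by
  set c := D.B a b with hc
  have hba : D.B b a = c := D.symm b hb a ha
  have haa : D.B a a = 1 := D.norm_one a ha
  have hbb : D.B b b = 1 := D.norm_one b hb
  have hcc : c = -Real.cosh θ := by rw [hθ]; ring
  have hspos : 0 < Real.sinh θ := Real.sinh_pos_iff.mpr hθpos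
  have hs : Real.sinh θ ≠ 0 := ne_of_gt hspos
  have key : ∀ α β : ℝ, ((ua * ub : (Module.End ℝ V)ˣ) : Module.End ℝ V) (α • a + β • b)
      = ((4*c^2-1)*α + 2*c*β) • a + (-(2*c)*α - β) • b := by
    intro α β
    rw [Units.val_mul, Module.End.mul_apply, hua, hub]
    have e1 : D.refl b (α • a + β • b) = α • a + (-2*c*α - β) • b := by
      show (α • a + β • b) - (2 * D.B (α • a + β • b) b) • b = _
      have : D.B (α • a + β • b) b = α*c + β := by
        simp only [map_add, map_smul, LinearMap.add_apply, LinearMap.smul_apply, smul_eq_mul,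
          hc.symm, hbb]; ring
      rw [this]; module
    rw [e1]
    show (α • a + (-2*c*α - β) • b) - (2 * D.B (α • a + (-2*c*α - β) • b) a) • a = _
    have : D.B (α • a + (-2*c*α - β) • b) a = α + (-2*c*α - β)*c := by
      simp only [map_add, map_smul, LinearMap.add_apply, LinearMap.smul_apply, smul_eq_mul,
        hba, haa]; ring
    rw [this]; module
  have hrefla : ∀ x, D.refl a (D.refl a x) = x := by
    intro x
    show (x - (2 * D.B x a) • a) - (2 * D.B (x - (2 * D.B x a) • a) a) • a = x
    have : D.B (x - (2 * D.B x a) • a) a = - D.B x a := by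
      simp only [map_sub, map_smul, LinearMap.sub_apply, LinearMap.smul_apply, smul_eq_mul,
        haa]; ring
    rw [this]; module
  have hreflb : ∀ x, D.refl b (D.refl b x) = x := by
    intro x
    show (x - (2 * D.B x b) • b) - (2 * D.B (x - (2 * D.B x b) • b) b) • b = x
    have : D.B (x - (2 * D.B x b) • b) b = - D.B x b := by
      simp only [map_sub, map_smul, LinearMap.sub_apply, LinearMap.smul_apply, smul_eq_mul,
        hbb]; ring
    rw [this]; module
  have hua2 : ua * ua = 1 := by
    apply Units.ext
    rw [Units.val_mul, Units.val_one, hua]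
    exact LinearMap.ext hrefla
  have hub2 : ub * ub = 1 := by
    apply Units.ext
    rw [Units.val_mul, Units.val_one, hub]
    exact LinearMap.ext hreflb
  have hinv : (ua * ub)⁻¹ = ub * ua := by
    have : (ua * ub) * (ub * ua) = 1 := by
      rw [mul_assoc, ← mul_assoc ub, hub2, one_mul, hua2]
    exact (eq_inv_of_mul_eq_one_right this).symm
  have keyinv : ∀ α β : ℝ, (((ua * ub)⁻¹ : (Module.End ℝ V)ˣ) : Module.End ℝ V) (α • a + β • b)
      = (-α - 2*c*β) • a + (2*c*α + (4*c^2-1)*β) • b := by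
    intro α β
    rw [hinv, Units.val_mul, Module.End.mul_apply, hua, hub]
    have e1 : D.refl a (α • a + β • b) = (-α - 2*c*β) • a + β • b := by
      show (α • a + β • b) - (2 * D.B (α • a + β • b) a) • a = _
      have : D.B (α • a + β • b) a = α + β*c := by
        simp only [map_add, map_smul, LinearMap.add_apply, LinearMap.smul_apply, smul_eq_mul,
          hba, haa]; ring
      rw [this]; module
    rw [e1]
    show ((-α - 2*c*β) • a + β • b) - (2 * D.B ((-α - 2*c*β) • a + β • b) b) • b = _
    have : D.B ((-α - 2*c*β) • a + β • b) b = (-α - 2*c*β)*c + β := by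
      simp only [map_add, map_smul, LinearMap.add_apply, LinearMap.smul_apply, smul_eq_mul,
        hc.symm, hbb]; ring
    rw [this]; module
  have main : ∀ i : ℤ, (((ua * ub) ^ i : (Module.End ℝ V)ˣ) : Module.End ℝ V) a =
      (Real.sinh (((2 * i + 1 : ℤ) : ℝ) * θ) / Real.sinh θ) • a +
      (Real.sinh (((2 * i : ℤ) : ℝ) * θ) / Real.sinh θ) • b := by
    intro i
    induction i using Int.induction_on with
    | zero =>
      norm_num [zpow_zero, Units.val_one, Module.End.one_apply, Real.sinh_zero, div_self hs]
    | succ i ih =>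
      have hp1 : (ua*ub)^((i:ℤ)+1) = (ua*ub) * (ua*ub)^(i:ℤ) := by
        rw [add_comm, zpow_add, zpow_one]
      rw [hp1, Units.val_mul, Module.End.mul_apply, ih, key]
      have A : Real.sinh ((2*(i:ℝ)+2)*θ)
          = 2*Real.cosh θ*Real.sinh ((2*(i:ℝ)+1)*θ) - Real.sinh (2*(i:ℝ)*θ) := by
        have h := sinh_step_aux (2*(i:ℝ)*θ) θ
        rw [show 2*(i:ℝ)*θ + 2*θ = (2*(i:ℝ)+2)*θ by ring,
            show 2*(i:ℝ)*θ + θ = (2*(i:ℝ)+1)*θ by ring] at h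
        exact h
      have B : Real.sinh ((2*(i:ℝ)+3)*θ)
          = 2*Real.cosh θ*Real.sinh ((2*(i:ℝ)+2)*θ) - Real.sinh ((2*(i:ℝ)+1)*θ) := by
        have h := sinh_step_aux ((2*(i:ℝ)+1)*θ) θ
        rw [show (2*(i:ℝ)+1)*θ + 2*θ = (2*(i:ℝ)+3)*θ by ring,
            show (2*(i:ℝ)+1)*θ + θ = (2*(i:ℝ)+2)*θ by ring] at h
        exact h
      have hf : (4*c^2-1)*(Real.sinh (((2 * (i:ℤ) + 1 : ℤ) : ℝ) * θ) / Real.sinh θ)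
            + 2*c*(Real.sinh (((2 * (i:ℤ) : ℤ) : ℝ) * θ) / Real.sinh θ)
          = Real.sinh (((2 * ((i:ℤ)+1) + 1 : ℤ) : ℝ) * θ) / Real.sinh θ := by
        have hfnum : Real.sinh ((2*(i:ℝ)+3)*θ)
            = (4*Real.cosh θ^2-1)*Real.sinh ((2*(i:ℝ)+1)*θ)
              - 2*Real.cosh θ*Real.sinh (2*(i:ℝ)*θ) := by
          linear_combination B + 2*Real.cosh θ * A
        rw [hcc]; push_cast
        rw [show (2*((i:ℝ)+1)+1)*θ = (2*(i:ℝ)+3)*θ by ring]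
        linear_combination -(Real.sinh θ)⁻¹ * hfnum
      have hg : -(2*c)*(Real.sinh (((2 * (i:ℤ) + 1 : ℤ) : ℝ) * θ) / Real.sinh θ)
            - (Real.sinh (((2 * (i:ℤ) : ℤ) : ℝ) * θ) / Real.sinh θ)
          = Real.sinh (((2 * ((i:ℤ)+1) : ℤ) : ℝ) * θ) / Real.sinh θ := by
        rw [hcc]; push_cast
        rw [show (2*((i:ℝ)+1))*θ = (2*(i:ℝ)+2)*θ by ring]
        linear_combination -(Real.sinh θ)⁻¹ * A
      rw [hf, hg]
    | pred i ih =>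
      have hp1 : (ua*ub)^(-(i:ℤ)-1) = (ua*ub)⁻¹ * (ua*ub)^(-(i:ℤ)) := by
        rw [sub_eq_add_neg, add_comm, zpow_add, zpow_neg_one]
      rw [hp1, Units.val_mul, Module.End.mul_apply, ih, keyinv]
      have A : Real.sinh ((2*(-(i:ℝ))+1)*θ)
          = 2*Real.cosh θ*Real.sinh (2*(-(i:ℝ))*θ) - Real.sinh ((2*(-(i:ℝ))-1)*θ) := by
        have h := sinh_step_aux ((2*(-(i:ℝ))-1)*θ) θ
        rw [show (2*(-(i:ℝ))-1)*θ + 2*θ = (2*(-(i:ℝ))+1)*θ by ring,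
            show (2*(-(i:ℝ))-1)*θ + θ = 2*(-(i:ℝ))*θ by ring] at h
        exact h
      have B : Real.sinh (2*(-(i:ℝ))*θ)
          = 2*Real.cosh θ*Real.sinh ((2*(-(i:ℝ))-1)*θ) - Real.sinh ((2*(-(i:ℝ))-2)*θ) := by
        have h := sinh_step_aux ((2*(-(i:ℝ))-2)*θ) θ
        rw [show (2*(-(i:ℝ))-2)*θ + 2*θ = 2*(-(i:ℝ))*θ by ring,
            show (2*(-(i:ℝ))-2)*θ + θ = (2*(-(i:ℝ))-1)*θ by ring] at h
        exact h
      have hf : -(Real.sinh (((2 * (-(i:ℤ)) + 1 : ℤ) : ℝ) * θ) / Real.sinh θ)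
            - 2*c*(Real.sinh (((2 * (-(i:ℤ)) : ℤ) : ℝ) * θ) / Real.sinh θ)
          = Real.sinh (((2 * (-(i:ℤ)-1) + 1 : ℤ) : ℝ) * θ) / Real.sinh θ := by
        have hfnum : Real.sinh ((2*(-(i:ℝ))-1)*θ)
            = -Real.sinh ((2*(-(i:ℝ))+1)*θ) + 2*Real.cosh θ*Real.sinh (2*(-(i:ℝ))*θ) := by
          linear_combination A
        rw [hcc]; push_cast
        rw [show (2*(-(i:ℝ)-1)+1)*θ = (2*(-(i:ℝ))-1)*θ by ring]
        linear_combination -(Real.sinh θ)⁻¹ * hfnum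
      have hg : 2*c*(Real.sinh (((2 * (-(i:ℤ)) + 1 : ℤ) : ℝ) * θ) / Real.sinh θ)
            + (4*c^2-1)*(Real.sinh (((2 * (-(i:ℤ)) : ℤ) : ℝ) * θ) / Real.sinh θ)
          = Real.sinh (((2 * (-(i:ℤ)-1) : ℤ) : ℝ) * θ) / Real.sinh θ := by
        have hgnum : Real.sinh ((2*(-(i:ℝ))-2)*θ)
            = -2*Real.cosh θ*Real.sinh ((2*(-(i:ℝ))+1)*θ)
              + (4*Real.cosh θ^2-1)*Real.sinh (2*(-(i:ℝ))*θ) := by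
          linear_combination B + 2*Real.cosh θ * A
        rw [hcc]; push_cast
        rw [show (2*(-(i:ℝ)-1))*θ = (2*(-(i:ℝ))-2)*θ by ring]
        linear_combination -(Real.sinh θ)⁻¹ * hgnum
      rw [hf, hg]
  refine ⟨main, ?_⟩
  intro hfin
  obtain ⟨n, hn, hpow⟩ := isOfFinOrder_iff_pow_eq_one.mp hfin
  have hmn := main (n : ℤ)
  rw [zpow_natCast, hpow, Units.val_one, Module.End.one_apply] at hmn
  set f := Real.sinh (((2 * (n:ℤ) + 1 : ℤ) : ℝ) * θ) / Real.sinh θ with hfdef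
  set g := Real.sinh (((2 * (n:ℤ) : ℤ) : ℝ) * θ) / Real.sinh θ with hgdef
  have h1 : (1:ℝ) = f + g*c := by
    have := congrArg (fun v => D.B v a) hmn
    simpa only [map_add, map_smul, LinearMap.add_apply, LinearMap.smul_apply, smul_eq_mul,
      haa, hba, mul_one] using this
  have h2 : c = f*c + g := by
    have := congrArg (fun v => D.B v b) hmn
    simpa only [map_add, map_smul, LinearMap.add_apply, LinearMap.smul_apply, smul_eq_mul,
      hc.symm, hbb, mul_one] using this
  have hg0 : g = 0 := by
    have hz : g * (c^2 - 1) = 0 := by linear_combination h2 - c*h1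
    have : c^2 - 1 > 0 := by nlinarith
    exact by
      rcases mul_eq_zero.mp hz with h | h
      · exact h
      · linarith
  have hsz : Real.sinh (((2 * (n:ℤ) : ℤ) : ℝ) * θ) = 0 := by
    have := hg0
    rw [hgdef, div_eq_zero_iff] at this
    tauto
  rw [Real.sinh_eq_zero] at hsz
  have hnpos : (0:ℝ) < (n:ℝ) := by exact_mod_cast hn
  have : (0:ℝ) < ((2 * (n:ℤ) : ℤ) : ℝ) * θ := by push_cast; positivity
  linarith [hsz, this]
end

section
/- The homomorphism φ : W → G sending r_a to ρ_a is injective (hence an isomorphism onto G), where W is the abstract Coxeter group on generators {r_a : a ∈ Π} with relations (r_a r_b)^{m_{ab}} = 1, and G = ⟨ρ_a : a ∈ Π⟩ ≤ GL(V). -/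
open Real

variable {V : Type*} [AddCommGroup V] [Module ℝ V]

section PLCLemmas

variable {V : Type*} [AddCommGroup V] [Module ℝ V]

lemma plc_of_mem {A : Set V} {a : V} (ha : a ∈ A) : a ∈ PLC A := by
  refine ⟨{a}, fun _ => 1, by simpa, by simp, ⟨a, by simp⟩, by simp⟩

lemma plc_smul {A : Set V} {v : V} {r : ℝ} (hr : 0 < r) (hv : v ∈ PLC A) : r • v ∈ PLC A := by
  obtain ⟨s, c, hsA, hc, ⟨x0, hx0, hx0'⟩, rfl⟩ := hv
  refine ⟨s, fun x => r * c x, hsA, fun x hx => mul_nonneg hr.le (hc x hx),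
    ⟨x0, hx0, mul_pos hr hx0'⟩, ?_⟩
  rw [Finset.smul_sum]
  exact Finset.sum_congr rfl fun x _ => (smul_smul r (c x) x)

lemma plc_add {A : Set V} {v w : V} (hv : v ∈ PLC A) (hw : w ∈ PLC A) : v + w ∈ PLC A := by
  classical
  obtain ⟨s, c, hsA, hc, ⟨x0, hx0, hx0'⟩, rfl⟩ := hv
  obtain ⟨t, d, htA, hd, _, rfl⟩ := hw
  refine ⟨s ∪ t, fun x => (if x ∈ s then c x else 0) + (if x ∈ t then d x else 0),
    ?_, ?_, ⟨x0, Finset.mem_union_left _ hx0, ?_⟩, ?_⟩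
  · rw [Finset.coe_union]; exact Set.union_subset hsA htA
  · intro x _
    have h1 : 0 ≤ (if x ∈ s then c x else 0) := by
      split_ifs with h; exacts [hc x h, le_rfl]
    have h2 : 0 ≤ (if x ∈ t then d x else 0) := by
      split_ifs with h; exacts [hd x h, le_rfl]
    exact add_nonneg h1 h2
  · show 0 < (if x0 ∈ s then c x0 else 0) + (if x0 ∈ t then d x0 else 0)
    rw [if_pos hx0]
    apply add_pos_of_pos_of_nonneg hx0'
    split_ifs with h; exacts [hd x0 h, le_rfl]
  · have e1 : ∑ x ∈ s ∪ t, (if x ∈ s then c x • x else (0:V)) = ∑ x ∈ s, c x • x := by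
      rw [Finset.sum_ite_mem, Finset.union_inter_cancel_left]
    have e2 : ∑ x ∈ s ∪ t, (if x ∈ t then d x • x else (0:V)) = ∑ x ∈ t, d x • x := by
      rw [Finset.sum_ite_mem, Finset.union_inter_cancel_right]
    simp only [add_smul, ite_smul, zero_smul, Finset.sum_add_distrib, e1, e2]

lemma plc_combo {A : Set V} {v w : V} {μ ν : ℝ} (hμ : 0 ≤ μ) (hν : 0 ≤ ν) (h : 0 < μ ∨ 0 < ν)
    (hv : v ∈ PLC A) (hw : w ∈ PLC A) : μ • v + ν • w ∈ PLC A := by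
  rcases hμ.eq_or_lt with rfl | hμ'
  · rcases h with h | h
    · exact absurd h (lt_irrefl 0)
    · simpa using plc_smul h hw
  · rcases hν.eq_or_lt with rfl | hν'
    · simpa using plc_smul hμ' hv
    · exact plc_add (plc_smul hμ' hv) (plc_smul hν' hw)

end PLCLemmas
section Geo

open CoxeterSystem

variable {V : Type*} [AddCommGroup V] [Module ℝ V] (D : CoxeterDatum V) (M : CoxeterMatrix D.Pi)
  (φ : M.Group →* (Module.End ℝ V)ˣ)

lemma refl_apply (a x : V) : D.refl a x = x - (2 * D.B x a) • a := rfl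

lemma act_simple (hφ : ∀ a : D.Pi, ((φ (M.simple a) : Module.End ℝ V)) = D.refl (a : V))
    (i : D.Pi) (x : V) :
    (φ ((M.toCoxeterSystem).simple i) : Module.End ℝ V) x = x - (2 * D.B x i) • (i : V) := by
  rw [CoxeterMatrix.toCoxeterSystem_simple, hφ]; rfl

lemma act_cons (hφ : ∀ a : D.Pi, ((φ (M.simple a) : Module.End ℝ V)) = D.refl (a : V))
    (i : D.Pi) (ω : List D.Pi) (x : V) :
    (φ ((M.toCoxeterSystem).wordProd (i :: ω)) : Module.End ℝ V) x
      = (φ ((M.toCoxeterSystem).wordProd ω) : Module.End ℝ V) x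
        - (2 * D.B ((φ ((M.toCoxeterSystem).wordProd ω) : Module.End ℝ V) x) i) • (i : V) := by
  rw [CoxeterSystem.wordProd_cons, map_mul, Units.val_mul, Module.End.mul_apply,
    act_simple D M φ hφ]

lemma act_one (x : V) : (φ ((M.toCoxeterSystem).wordProd []) : Module.End ℝ V) x = x := by
  rw [CoxeterSystem.wordProd_nil, map_one, Units.val_one, Module.End.one_apply]

end Geo
section Dihedral

open CoxeterSystem

variable {V : Type*} [AddCommGroup V] [Module ℝ V] (D : CoxeterDatum V) (M : CoxeterMatrix D.Pi)
  (φ : M.Group →* (Module.End ℝ V)ˣ)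

lemma dihedral_cone (hφ : ∀ a : D.Pi, ((φ (M.simple a) : Module.End ℝ V)) = D.refl (a : V))
    (hM : ∀ a b : D.Pi, a ≠ b →
      (M a b = 0 → D.B a b ≤ -1) ∧
      (M a b ≠ 0 → 2 ≤ M a b ∧ D.B a b = -Real.cos (Real.pi / (M a b : ℝ))))
    (a b : D.Pi) (hab : a ≠ b) (k : ℕ) (hk : M a b ≠ 0 → k < M a b) :
    ∃ μ ν : ℝ, 0 ≤ μ ∧ 0 ≤ ν ∧ (0 < μ ∨ 0 < ν) ∧
      (φ ((M.toCoxeterSystem).wordProd (alternatingWord a b k)) : Module.End ℝ V) (a : V)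
        = μ • (a : V) + ν • (b : V) := by
  have hBaa : D.B (a : V) (a : V) = 1 := D.norm_one _ a.2
  have hBbb : D.B (b : V) (b : V) = 1 := D.norm_one _ b.2
  have hsym : D.B (b : V) (a : V) = D.B (a : V) (b : V) := D.symm _ b.2 _ a.2
  set c := D.B (a : V) (b : V) with hc
  set Y : ℕ → V := fun j =>
    (φ ((M.toCoxeterSystem).wordProd (alternatingWord a b j)) : Module.End ℝ V) (a : V) with hYdef
  have hY0 : Y 0 = (a : V) := act_one D M φ (a : V)
  have hstepb : ∀ j : ℕ, Even j →
      Y (j+1) = Y j - (2 * D.B (Y j) (b : V)) • (b : V) := by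
    intro j hj
    show (φ ((M.toCoxeterSystem).wordProd (alternatingWord a b (j+1))) : Module.End ℝ V) (a : V)
      = _
    rw [alternatingWord_succ', if_pos hj, act_cons D M φ hφ]
  have hstepa : ∀ j : ℕ, ¬ Even j →
      Y (j+1) = Y j - (2 * D.B (Y j) (a : V)) • (a : V) := by
    intro j hj
    show (φ ((M.toCoxeterSystem).wordProd (alternatingWord a b (j+1))) : Module.End ℝ V) (a : V)
      = _
    rw [alternatingWord_succ', if_neg hj, act_cons D M φ hφ]
  by_cases hfin : M a b = 0
  · -- infinite case
    have hcle : c ≤ -1 := (hM a b hab).1 hfin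
    have main : ∀ j : ℕ, ∃ p q : ℝ, Y j = p • (a : V) + q • (b : V) ∧ 0 ≤ p ∧ 0 ≤ q ∧
        (Even j → q + 1 ≤ p) ∧ (¬ Even j → p + 1 ≤ q) := by
      intro j
      induction j with
      | zero =>
        exact ⟨1, 0, by rw [hY0]; module, zero_le_one, le_rfl,
          fun _ => by norm_num, fun h => absurd Even.zero h⟩
      | succ j ih =>
        obtain ⟨p, q, hYj, hp, hq, he, ho⟩ := ih
        by_cases hev : Even j
        · have hB : D.B (Y j) (b : V) = p * c + q := by
            rw [hYj]
            simp only [map_add, map_smul, LinearMap.add_apply, LinearMap.smul_apply,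
              smul_eq_mul, hBbb, ← hc]
            ring
          have hp1 : q + 1 ≤ p := he hev
          have hprod : 0 ≤ (-c - 1) * p := mul_nonneg (by linarith) hp
          refine ⟨p, q - 2 * (p * c + q), ?_, hp, by nlinarith, ?_, ?_⟩
          · rw [hstepb j hev, hB, hYj]; module
          · intro h; exact ((Nat.even_add_one.mp h) hev).elim
          · intro _; nlinarith
        · have hB : D.B (Y j) (a : V) = p + q * c := by
            rw [hYj]
            simp only [map_add, map_smul, LinearMap.add_apply, LinearMap.smul_apply,
              smul_eq_mul, hBaa, hsym, ← hc]
            ring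
          have hq1 : p + 1 ≤ q := ho hev
          have hprod : 0 ≤ (-c - 1) * q := mul_nonneg (by linarith) hq
          refine ⟨p - 2 * (p + q * c), q, ?_, by nlinarith, hq, ?_, ?_⟩
          · rw [hstepa j hev, hB, hYj]; module
          · intro _; nlinarith
          · intro h; exact (h (Nat.even_add_one.mpr hev)).elim
    obtain ⟨p, q, hY, hp, hq, he, ho⟩ := main k
    refine ⟨p, q, hp, hq, ?_, hY⟩
    by_cases hev : Even k
    · left; linarith [he hev]
    · right; linarith [ho hev]
  · -- finite case
    obtain ⟨hm2, hcval⟩ := (hM a b hab).2 hfin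
    set m := M a b with hm
    have hklt : k < m := hk hfin
    set θ := Real.pi / m with hθdef
    have hc' : c = -Real.cos θ := hcval
    have hmpos : (0 : ℝ) < m := by
      have : (2 : ℝ) ≤ m := by exact_mod_cast hm2
      linarith
    have hθpos : 0 < θ := div_pos Real.pi_pos hmpos
    have hθltpi : θ < Real.pi :=
      div_lt_self Real.pi_pos (by exact_mod_cast (by omega : 1 < m))
    have hS : 0 < Real.sin θ := Real.sin_pos_of_pos_of_lt_pi hθpos hθltpi
    have hmθ : (m : ℝ) * θ = Real.pi := by
      rw [hθdef]; field_simp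
    set sn : ℕ → ℝ := fun j => Real.sin (j * θ) with hsn
    have hrec : ∀ j : ℕ, sn (j+2) = 2 * Real.cos θ * sn (j+1) - sn j := by
      intro j
      show Real.sin (((j+2 : ℕ) : ℝ) * θ) = 2 * Real.cos θ * Real.sin (((j+1 : ℕ) : ℝ) * θ)
        - Real.sin ((j : ℝ) * θ)
      push_cast
      rw [show ((j:ℝ)+2) * θ = ((j:ℝ)+1)*θ + θ by ring,
        show (j:ℝ) * θ = ((j:ℝ)+1)*θ - θ by ring, Real.sin_add, Real.sin_sub]
      ring
    have main : ∀ j : ℕ,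
        (Even j → Real.sin θ • Y j = sn (j+1) • (a : V) + sn j • (b : V)) ∧
        (¬ Even j → Real.sin θ • Y j = sn (j+1) • (b : V) + sn j • (a : V)) := by
      intro j
      induction j with
      | zero =>
        refine ⟨fun _ => ?_, fun h => absurd Even.zero h⟩
        rw [hY0]
        have h0 : sn 0 = 0 := by simp [hsn]
        have h1 : sn 1 = Real.sin θ := by simp [hsn]
        rw [h0, h1]; module
      | succ j ih =>
        constructor
        · intro hev1
          have hodd : ¬ Even j := Nat.even_add_one.mp hev1
          have ih2 := ih.2 hodd
          have hBa : Real.sin θ * D.B (Y j) (a : V) = sn (j+1) * c + sn j := by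
            have h := congrArg (fun v => D.B v (a : V)) ih2
            simp only [map_add, map_smul, LinearMap.add_apply, LinearMap.smul_apply,
              smul_eq_mul, hBaa, hsym, ← hc] at h
            rw [mul_one] at h; exact h
          rw [hstepa j hodd, smul_sub, ih2, smul_smul,
            show Real.sin θ * (2 * D.B (Y j) (a:V)) = 2 * (Real.sin θ * D.B (Y j) (a:V)) by ring,
            hBa, hrec j, hc']
          module
        · intro hodd1
          have hev : Even j := not_not.mp (fun h => hodd1 (Nat.even_add_one.mpr h))
          have ih1 := ih.1 hev
          have hBb : Real.sin θ * D.B (Y j) (b : V) = sn (j+1) * c + sn j := by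
            have h := congrArg (fun v => D.B v (b : V)) ih1
            simp only [map_add, map_smul, LinearMap.add_apply, LinearMap.smul_apply,
              smul_eq_mul, hBbb, ← hc] at h
            rw [mul_one] at h; exact h
          rw [hstepb j hev, smul_sub, ih1, smul_smul,
            show Real.sin θ * (2 * D.B (Y j) (b:V)) = 2 * (Real.sin θ * D.B (Y j) (b:V)) by ring,
            hBb, hrec j, hc']
          module
    have hsn_nonneg : ∀ j : ℕ, j ≤ m → 0 ≤ sn j := by
      intro j hj
      apply Real.sin_nonneg_of_nonneg_of_le_pi
      · positivity
      · rw [← hmθ]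
        exact mul_le_mul_of_nonneg_right (by exact_mod_cast hj) hθpos.le
    have hsn_pos : ∀ j : ℕ, 1 ≤ j → j < m → 0 < sn j := by
      intro j h1 hj
      apply Real.sin_pos_of_pos_of_lt_pi
      · have : (1:ℝ) ≤ j := by exact_mod_cast h1
        nlinarith
      · rw [← hmθ]
        exact mul_lt_mul_of_pos_right (by exact_mod_cast hj) hθpos
    have hp : 0 ≤ sn (k+1) := hsn_nonneg (k+1) hklt
    have hq : 0 ≤ sn k := hsn_nonneg k hklt.le
    have hpos : 0 < sn (k+1) ∨ 0 < sn k := by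
      rcases lt_or_eq_of_le (Nat.succ_le_of_lt hklt) with h | h
      · exact Or.inl (hsn_pos (k+1) (Nat.le_add_left 1 k) h)
      · right
        apply hsn_pos k _ hklt
        omega
    have hinv : ∀ x y z : V, Real.sin θ • x = y → x = (Real.sin θ)⁻¹ • y := by
      intro x y _ h
      rw [← h, inv_smul_smul₀ hS.ne']
    by_cases hev : Even k
    · refine ⟨sn (k+1) / Real.sin θ, sn k / Real.sin θ, div_nonneg hp hS.le,
        div_nonneg hq hS.le, ?_, ?_⟩
      · rcases hpos with h | h
        · exact Or.inl (div_pos h hS)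
        · exact Or.inr (div_pos h hS)
      · have h := hinv _ _ 0 ((main k).1 hev)
        show Y k = _
        rw [h, smul_add, smul_smul, smul_smul, inv_mul_eq_div, inv_mul_eq_div]
    · refine ⟨sn k / Real.sin θ, sn (k+1) / Real.sin θ, div_nonneg hq hS.le,
        div_nonneg hp hS.le, ?_, ?_⟩
      · rcases hpos with h | h
        · exact Or.inr (div_pos h hS)
        · exact Or.inl (div_pos h hS)
      · have h := hinv _ _ 0 ((main k).2 hev)
        show Y k = _
        rw [h, smul_add, smul_smul, smul_smul, inv_mul_eq_div, inv_mul_eq_div, add_comm]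

end Dihedral
section Words

open CoxeterSystem

variable {V : Type*} [AddCommGroup V] [Module ℝ V] (D : CoxeterDatum V) (M : CoxeterMatrix D.Pi)

lemma word_eq_alternating : ∀ (ω : List D.Pi) (x y : D.Pi),
    (M.toCoxeterSystem).IsReduced ω → (∀ i ∈ ω, i = x ∨ i = y) → ω.getLast? = some y →
    ω = CoxeterSystem.alternatingWord x y ω.length := by
  intro ω
  induction ω using List.reverseRecOn with
  | nil => intro x y _ _ h; simp at h
  | append_singleton l z ih =>
    intro x y hred hmem hlast
    have hz : z = y := by
      rw [List.getLast?_concat] at hlast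
      exact Option.some_injective _ hlast
    subst hz
    rcases l.eq_nil_or_concat with rfl | ⟨l', t, hl'⟩
    · rfl
    · rw [List.concat_eq_append] at hl'
      subst hl'
      have ht : t = x ∨ t = z := hmem t (by simp)
      rcases ht with ht | ht
      · have hredl : (M.toCoxeterSystem).IsReduced (l' ++ [t]) := by
          have h := CoxeterSystem.IsReduced.take hred (l' ++ [t]).length
          rwa [List.take_left] at h
        have hmeml : ∀ i ∈ l' ++ [t], i = z ∨ i = t := by
          intro i hi
          rcases hmem i (List.mem_append_left _ hi) with h | h
          · right; rw [h, ← ht]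
          · left; exact h
        have heq := ih z t hredl hmeml (List.getLast?_concat (l := l'))
        rw [ht] at heq
        rw [ht]
        calc l' ++ [x] ++ [z]
            = (CoxeterSystem.alternatingWord z x (l' ++ [x]).length).concat z := by
              rw [← heq, List.concat_eq_append]
          _ = CoxeterSystem.alternatingWord x z ((l' ++ [x]).length + 1) :=
              (CoxeterSystem.alternatingWord_succ x z _).symm
          _ = CoxeterSystem.alternatingWord x z (l' ++ [x] ++ [z]).length := by
              congr 1; simp
      · exfalso
        rw [ht] at hred
        have hπ : (M.toCoxeterSystem).wordProd (l' ++ [z] ++ [z])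
            = (M.toCoxeterSystem).wordProd l' := by
          rw [CoxeterSystem.wordProd_append, CoxeterSystem.wordProd_append,
            CoxeterSystem.wordProd_singleton, mul_assoc,
            CoxeterSystem.simple_mul_simple_self, mul_one]
        have h1 := (M.toCoxeterSystem).length_wordProd_le l'
        unfold CoxeterSystem.IsReduced at hred
        rw [hπ] at hred
        simp at hred
        omega

end Words
section Key

open CoxeterSystem

variable {V : Type*} [AddCommGroup V] [Module ℝ V] (D : CoxeterDatum V) (M : CoxeterMatrix D.Pi)
  (φ : M.Group →* (Module.End ℝ V)ˣ)

lemma key_lemma (hφ : ∀ a : D.Pi, ((φ (M.simple a) : Module.End ℝ V)) = D.refl (a : V))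
    (hM : ∀ a b : D.Pi, a ≠ b →
      (M a b = 0 → D.B a b ≤ -1) ∧
      (M a b ≠ 0 → 2 ≤ M a b ∧ D.B a b = -Real.cos (Real.pi / (M a b : ℝ)))) :
    ∀ n : ℕ, ∀ w : M.Group, (M.toCoxeterSystem).length w = n →
    ∀ a : D.Pi,
      (M.toCoxeterSystem).length w
        < (M.toCoxeterSystem).length (w * (M.toCoxeterSystem).simple a) →
    (φ w : Module.End ℝ V) (a : V) ∈ PLC D.Pi := by
  intro n
  induction n using Nat.strong_induction_on with
  | _ n ih =>
  intro w hw a ha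
  rcases Nat.eq_zero_or_pos n with rfl | hn
  · have hw1 : w = 1 := (M.toCoxeterSystem).length_eq_zero_iff.mp hw
    subst hw1
    rw [map_one, Units.val_one, Module.End.one_apply]
    exact plc_of_mem a.2
  · have hw1 : w ≠ 1 := by
      intro h
      rw [h, (M.toCoxeterSystem).length_one] at hw
      omega
    obtain ⟨b, hb⟩ := (M.toCoxeterSystem).exists_rightDescent_of_ne_one hw1
    have hab : a ≠ b := by
      rintro rfl
      exact lt_asymm ha hb
    set S : Set ℕ := {p | ∃ v ω, (∀ i ∈ ω, i = a ∨ i = b) ∧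
      w = v * (M.toCoxeterSystem).wordProd ω ∧
      (M.toCoxeterSystem).length w = (M.toCoxeterSystem).length v + ω.length ∧
      (M.toCoxeterSystem).length v = p} with hSdef
    have hwb : (M.toCoxeterSystem).length (w * (M.toCoxeterSystem).simple b) + 1
        = (M.toCoxeterSystem).length w := (M.toCoxeterSystem).isRightDescent_iff.mp hb
    have hSne : (M.toCoxeterSystem).length (w * (M.toCoxeterSystem).simple b) ∈ S := by
      refine ⟨w * (M.toCoxeterSystem).simple b, [b], by simp, ?_, ?_, rfl⟩
      · rw [CoxeterSystem.wordProd_singleton,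
          (M.toCoxeterSystem).simple_mul_simple_cancel_right]
      · simp only [List.length_singleton]
        omega
    have hSmem := Nat.sInf_mem (Set.nonempty_of_mem hSne)
    obtain ⟨v, ω, hmem, hwv, hsum, hlv⟩ := hSmem
    have hvlt : (M.toCoxeterSystem).length v < (M.toCoxeterSystem).length w := by
      have := Nat.sInf_le hSne
      omega
    -- v has no right descent at a
    have hva : (M.toCoxeterSystem).length v
        < (M.toCoxeterSystem).length (v * (M.toCoxeterSystem).simple a) := by
      rcases Nat.lt_or_ge ((M.toCoxeterSystem).length v)
          ((M.toCoxeterSystem).length (v * (M.toCoxeterSystem).simple a)) with h | h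
      · exact h
      · exfalso
        have hne := (M.toCoxeterSystem).length_mul_simple_ne v a
        have hd : (M.toCoxeterSystem).IsRightDescent v a := lt_of_le_of_ne h hne
        have hd' := (M.toCoxeterSystem).isRightDescent_iff.mp hd
        have hmem' : (M.toCoxeterSystem).length (v * (M.toCoxeterSystem).simple a) ∈ S := by
          refine ⟨v * (M.toCoxeterSystem).simple a, a :: ω, ?_, ?_, ?_, rfl⟩
          · intro i hi
            rcases List.mem_cons.mp hi with rfl | hi'
            · exact Or.inl rfl
            · exact hmem i hi'
          · rw [CoxeterSystem.wordProd_cons, ← mul_assoc,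
              (M.toCoxeterSystem).simple_mul_simple_cancel_right]
            exact hwv
          · simp only [List.length_cons]
            omega
        have := Nat.sInf_le hmem'
        omega
    have hvb : (M.toCoxeterSystem).length v
        < (M.toCoxeterSystem).length (v * (M.toCoxeterSystem).simple b) := by
      rcases Nat.lt_or_ge ((M.toCoxeterSystem).length v)
          ((M.toCoxeterSystem).length (v * (M.toCoxeterSystem).simple b)) with h | h
      · exact h
      · exfalso
        have hne := (M.toCoxeterSystem).length_mul_simple_ne v b
        have hd : (M.toCoxeterSystem).IsRightDescent v b := lt_of_le_of_ne h hne
        have hd' := (M.toCoxeterSystem).isRightDescent_iff.mp hd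
        have hmem' : (M.toCoxeterSystem).length (v * (M.toCoxeterSystem).simple b) ∈ S := by
          refine ⟨v * (M.toCoxeterSystem).simple b, b :: ω, ?_, ?_, ?_, rfl⟩
          · intro i hi
            rcases List.mem_cons.mp hi with rfl | hi'
            · exact Or.inr rfl
            · exact hmem i hi'
          · rw [CoxeterSystem.wordProd_cons, ← mul_assoc,
              (M.toCoxeterSystem).simple_mul_simple_cancel_right]
            exact hwv
          · simp only [List.length_cons]
            omega
        have := Nat.sInf_le hmem'
        omega
    -- ω is reduced
    have hred : (M.toCoxeterSystem).IsReduced ω := by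
      have h1 := (M.toCoxeterSystem).length_wordProd_le ω
      have h2 : (M.toCoxeterSystem).length w
          ≤ (M.toCoxeterSystem).length v
            + (M.toCoxeterSystem).length ((M.toCoxeterSystem).wordProd ω) := by
        rw [hwv]; exact (M.toCoxeterSystem).length_mul_le _ _
      unfold CoxeterSystem.IsReduced
      omega
    -- ω is nonempty
    have hne : ω ≠ [] := by
      rintro rfl
      rw [CoxeterSystem.wordProd_nil, mul_one] at hwv
      rw [hwv] at hvlt
      omega
    -- last letter of ω is b
    obtain ⟨l', t, hl'⟩ := ω.eq_nil_or_concat.resolve_left hne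
    rw [List.concat_eq_append] at hl'
    have hlen_mul : ∀ (u : M.Group) (l : List D.Pi) (i : D.Pi),
        w * (M.toCoxeterSystem).simple i = u * (M.toCoxeterSystem).wordProd l →
        (M.toCoxeterSystem).length (w * (M.toCoxeterSystem).simple i)
          ≤ (M.toCoxeterSystem).length u + l.length := by
      intro u l i h
      rw [h]
      calc (M.toCoxeterSystem).length (u * (M.toCoxeterSystem).wordProd l)
          ≤ (M.toCoxeterSystem).length u
            + (M.toCoxeterSystem).length ((M.toCoxeterSystem).wordProd l) :=
            (M.toCoxeterSystem).length_mul_le _ _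
        _ ≤ (M.toCoxeterSystem).length u + l.length := by
            have := (M.toCoxeterSystem).length_wordProd_le l
            omega
    have htb : t = b := by
      rcases hmem t (by rw [hl']; simp) with rfl | rfl
      · exfalso
        have hws : w * (M.toCoxeterSystem).simple t
            = v * (M.toCoxeterSystem).wordProd l' := by
          rw [hwv, hl', CoxeterSystem.wordProd_append, CoxeterSystem.wordProd_singleton,
            mul_assoc, mul_assoc, (M.toCoxeterSystem).simple_mul_simple_self, mul_one]
        have h1 := hlen_mul _ _ _ hws
        have h2 : ω.length = l'.length + 1 := by rw [hl']; simp
        omega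
      · rfl
    rw [htb] at hl'
    have hlast : ω.getLast? = some b := by rw [hl']; exact List.getLast?_concat (l := l')
    -- ω is the alternating word
    have ωalt : ω = CoxeterSystem.alternatingWord a b ω.length :=
      word_eq_alternating D M ω a b hred hmem hlast
    -- length bound
    have hkb : M a b ≠ 0 → ω.length < M a b := by
      intro h0
      rcases Nat.lt_or_ge ω.length (M a b) with h | h
      · exact h
      exfalso
      rcases Nat.lt_or_ge (M a b) ω.length with h' | h'
      · exact (M.toCoxeterSystem).not_isReduced_alternatingWord a b h0 h' (ωalt ▸ hred)
      have hkm : ω.length = M a b := le_antisymm h' h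
      have hm2 : 2 ≤ M a b := ((hM a b hab).2 h0).1
      -- braid relation: π ω = π (alternatingWord b a (M a b))
      have hbraid : (M.toCoxeterSystem).wordProd ω
          = (M.toCoxeterSystem).wordProd (CoxeterSystem.alternatingWord b a (M a b)) := by
        rw [ωalt, hkm]
        have h := (M.toCoxeterSystem).wordProd_braidWord_eq a b
        have h2 : CoxeterSystem.alternatingWord b a (M b a)
            = CoxeterSystem.alternatingWord b a (M a b) := by rw [M.symmetric b a]
        exact h.trans (congrArg (M.toCoxeterSystem).wordProd h2)
      have hdecomp : CoxeterSystem.alternatingWord b a (M a b)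
          = (CoxeterSystem.alternatingWord a b (M a b - 1)).concat a := by
        rw [show M a b = (M a b - 1) + 1 by omega]
        exact CoxeterSystem.alternatingWord_succ b a _
      have hws : w * (M.toCoxeterSystem).simple a
          = v * (M.toCoxeterSystem).wordProd (CoxeterSystem.alternatingWord a b (M a b - 1)) := by
        rw [hwv, hbraid, hdecomp, List.concat_eq_append, CoxeterSystem.wordProd_append,
          CoxeterSystem.wordProd_singleton, mul_assoc, mul_assoc,
          (M.toCoxeterSystem).simple_mul_simple_self, mul_one]
      have h1 := hlen_mul _ _ _ hws
      rw [CoxeterSystem.length_alternatingWord] at h1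
      omega
    obtain ⟨μ, ν, hμ, hν, hpos, hact⟩ := dihedral_cone D M φ hφ hM a b hab ω.length hkb
    rw [← ωalt] at hact
    have hIHa : (φ v : Module.End ℝ V) (a : V) ∈ PLC D.Pi :=
      ih ((M.toCoxeterSystem).length v) (by omega) v rfl a hva
    have hIHb : (φ v : Module.End ℝ V) (b : V) ∈ PLC D.Pi :=
      ih ((M.toCoxeterSystem).length v) (by omega) v rfl b hvb
    have hfinal : (φ w : Module.End ℝ V) (a : V)
        = μ • ((φ v : Module.End ℝ V) (a : V)) + ν • ((φ v : Module.End ℝ V) (b : V)) := by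
      rw [hwv, map_mul, Units.val_mul, Module.End.mul_apply, hact, map_add, map_smul, map_smul]
    rw [hfinal]
    exact plc_combo hμ hν hpos hIHa hIHb

end Key
/-- Corollary 1.4. The homomorphism `φ : W → G` with `φ(r_a) = ρ_a` is injective,
hence an isomorphism onto `G = ⟨ρ_a : a ∈ Π⟩`. Here `W` is the abstract Coxeter group presented
by a Coxeter matrix `M` compatible with the datum (`M a b = 0` encodes `m_{ab} = ∞`). -/
theorem geometric_representation_faithful (D : CoxeterDatum V) (M : CoxeterMatrix D.Pi)
    (hM : ∀ a b : D.Pi, a ≠ b →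
      (M a b = 0 → D.B a b ≤ -1) ∧
      (M a b ≠ 0 → 2 ≤ M a b ∧ D.B a b = -Real.cos (Real.pi / (M a b : ℝ))))
    (φ : M.Group →* (Module.End ℝ V)ˣ)
    (hφ : ∀ a : D.Pi, ((φ (M.simple a) : Module.End ℝ V)) = D.refl (a : V)) :
    Function.Injective φ ∧ MonoidHom.range φ = D.Wgrp := by
  constructor
  · apply (injective_iff_map_eq_one φ).mpr
    intro w hwone
    by_contra hw1
    obtain ⟨a, hdesc⟩ := (M.toCoxeterSystem).exists_rightDescent_of_ne_one hw1
    have hlen : (M.toCoxeterSystem).length (w * (M.toCoxeterSystem).simple a)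
        < (M.toCoxeterSystem).length
          ((w * (M.toCoxeterSystem).simple a) * (M.toCoxeterSystem).simple a) := by
      rw [(M.toCoxeterSystem).simple_mul_simple_cancel_right]
      exact hdesc
    have hplc := key_lemma D M φ hφ hM _ (w * (M.toCoxeterSystem).simple a) rfl a hlen
    have hval : (φ (w * (M.toCoxeterSystem).simple a) : Module.End ℝ V) (a : V)
        = -(a : V) := by
      rw [map_mul, hwone, one_mul, CoxeterMatrix.toCoxeterSystem_simple, hφ]
      show (a : V) - (2 * D.B a a) • (a : V) = -(a : V)
      rw [D.norm_one _ a.2]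
      module
    rw [hval] at hplc
    have h0 : (0 : V) ∈ PLC D.Pi := by
      have h := plc_add (plc_of_mem a.2) hplc
      rwa [add_neg_cancel] at h
    exact D.zero_not_plc h0
  · have hclos := (M.toCoxeterSystem).subgroup_closure_range_simple
    rw [MonoidHom.range_eq_map, ← hclos, MonoidHom.map_closure]
    have himg : φ '' Set.range (M.toCoxeterSystem).simple = D.simples := by
      ext u
      constructor
      · rintro ⟨_, ⟨i, rfl⟩, rfl⟩
        exact ⟨(i : V), i.2, by rw [CoxeterMatrix.toCoxeterSystem_simple, hφ]⟩
      · rintro ⟨x, hx, hval⟩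
        refine ⟨(M.toCoxeterSystem).simple ⟨x, hx⟩, ⟨⟨x, hx⟩, rfl⟩, ?_⟩
        apply Units.ext
        rw [CoxeterMatrix.toCoxeterSystem_simple, hφ]
        exact hval.symm
    rw [himg]
    rfl
end
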